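/- With v_1 defined by the recursive Mex algorithm, for every n ≥ 0 one has v_1(n+1) - v_1(n) ∈ {1, 2, 3, 4}. -/
import Mathlib


/-- Minimum excluded value of a set of natural numbers. -/
noncomputable def mex (S : Set ℕ) : ℕ := sInf {m : ℕ | m ∉ S}

/-- Coordinates of a set of triples. -/
def coords (G : Set (ℕ × ℕ × ℕ)) : Set ℕ :=
  {k | ∃ x ∈ G, k = x.1 ∨ k = x.2.1 ∨ k = x.2.2}

/-- Pairwise coordinate differences of a set of triples. -/
def diffs (G : Set (ℕ × ℕ × ℕ)) : Set ℕ :=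
  {d | ∃ x ∈ G, d = x.2.1 - x.1 ∨ d = x.2.2 - x.2.1 ∨ d = x.2.2 - x.1}

/-- One step of the Mex algorithm: the next P-position. -/
noncomputable def step (G : Set (ℕ × ℕ × ℕ)) : ℕ × ℕ × ℕ :=
  let F := coords G
  let D := diffs G
  let a := mex F
  let b := mex ((fun d => a + d) '' D ∪ Set.Icc 1 a ∪ F)
  let c := mex ((fun d => b + d) '' D ∪ Set.Icc 1 b ∪ F)
  (a, b, c)

/-- The sets `G_n` of P-positions computed by the Mex algorithm. -/
noncomputable def Gset : ℕ → Set (ℕ × ℕ × ℕ)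
  | 0 => {(0, 0, 0)}
  | n + 1 => Gset n ∪ {step (Gset n)}

/-- The `n`-th P-position `(v_1(n), v_2(n), v_3(n))`. -/
noncomputable def v : ℕ → ℕ × ℕ × ℕ
  | 0 => (0, 0, 0)
  | n + 1 => step (Gset n)

noncomputable def v1 (n : ℕ) : ℕ := (v n).1
noncomputable def v2 (n : ℕ) : ℕ := (v n).2.1
noncomputable def v3 (n : ℕ) : ℕ := (v n).2.2

/-- `F_n`: the set of coordinates of elements of `G_n`. -/
noncomputable def Fset (n : ℕ) : Set ℕ := coords (Gset n)

/-- `D_n`: the set of pairwise coordinate differences over `G_n`. -/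
noncomputable def Dset (n : ℕ) : Set ℕ := diffs (Gset n)

-- auxiliary
noncomputable def dd (n : ℕ) : ℕ := v2 n - v1 n
noncomputable def ee (n : ℕ) : ℕ := v3 n - v2 n

lemma v1_succ (n : ℕ) : v1 (n + 1) = mex (Fset n) := rfl

lemma v2_succ (n : ℕ) : v2 (n + 1) =
    mex ((fun d => v1 (n+1) + d) '' Dset n ∪ Set.Icc 1 (v1 (n+1)) ∪ Fset n) := rfl

lemma v3_succ (n : ℕ) : v3 (n + 1) =
    mex ((fun d => v2 (n+1) + d) '' Dset n ∪ Set.Icc 1 (v2 (n+1)) ∪ Fset n) := rfl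

-- mex lemmas
lemma mex_le {S : Set ℕ} {x : ℕ} (hx : x ∉ S) : mex S ≤ x := Nat.sInf_le hx

lemma mex_notMem {S : Set ℕ} {x : ℕ} (hx : x ∉ S) : mex S ∉ S :=
  Nat.sInf_mem (⟨x, hx⟩ : Set.Nonempty {m : ℕ | m ∉ S})

lemma mem_of_lt_mex {S : Set ℕ} {m : ℕ} (h : m < mex S) : m ∈ S := by
  by_contra hm
  exact absurd (mex_le hm) (by omega)

-- Gset structure
lemma mem_Gset_v {k n : ℕ} (h : k ≤ n) : v k ∈ Gset n := by
  induction n with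
  | zero => interval_cases k; exact rfl
  | succ n ih =>
    rcases Nat.lt_or_ge k (n+1) with h' | h'
    · exact Set.mem_union_left _ (ih (by omega))
    · have : k = n + 1 := by omega
      subst this
      exact Set.mem_union_right _ rfl

lemma Gset_elim {n : ℕ} {x : ℕ × ℕ × ℕ} (hx : x ∈ Gset n) : ∃ k ≤ n, x = v k := by
  induction n with
  | zero => exact ⟨0, le_refl _, hx⟩
  | succ n ih =>
    rcases hx with hx | hx
    · obtain ⟨k, hk, hkx⟩ := ih hx
      exact ⟨k, by omega, hkx⟩
    · exact ⟨n + 1, le_refl _, hx⟩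

lemma mem_F1 {k n : ℕ} (h : k ≤ n) : v1 k ∈ Fset n := ⟨v k, mem_Gset_v h, Or.inl rfl⟩
lemma mem_F2 {k n : ℕ} (h : k ≤ n) : v2 k ∈ Fset n := ⟨v k, mem_Gset_v h, Or.inr (Or.inl rfl)⟩
lemma mem_F3 {k n : ℕ} (h : k ≤ n) : v3 k ∈ Fset n := ⟨v k, mem_Gset_v h, Or.inr (Or.inr rfl)⟩

lemma mem_Dd {k n : ℕ} (h : k ≤ n) : dd k ∈ Dset n := ⟨v k, mem_Gset_v h, Or.inl rfl⟩
lemma mem_De {k n : ℕ} (h : k ≤ n) : ee k ∈ Dset n := ⟨v k, mem_Gset_v h, Or.inr (Or.inl rfl)⟩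
lemma mem_Df {k n : ℕ} (h : k ≤ n) : v3 k - v1 k ∈ Dset n := ⟨v k, mem_Gset_v h, Or.inr (Or.inr rfl)⟩

lemma Fset_elim {n x : ℕ} (hx : x ∈ Fset n) : ∃ k ≤ n, x = v1 k ∨ x = v2 k ∨ x = v3 k := by
  obtain ⟨p, hp, hcase⟩ := hx
  obtain ⟨k, hk, rfl⟩ := Gset_elim hp
  exact ⟨k, hk, hcase⟩

lemma Dset_elim {n x : ℕ} (hx : x ∈ Dset n) : ∃ k ≤ n, x = dd k ∨ x = ee k ∨ x = v3 k - v1 k := by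
  obtain ⟨p, hp, hcase⟩ := hx
  obtain ⟨k, hk, rfl⟩ := Gset_elim hp
  exact ⟨k, hk, hcase⟩

lemma Fset_mono {n : ℕ} : Fset n ⊆ Fset (n + 1) := by
  intro x hx
  obtain ⟨p, hp, h⟩ := hx
  exact ⟨p, Set.mem_union_left _ hp, h⟩

lemma Dset_mono {n : ℕ} : Dset n ⊆ Dset (n + 1) := by
  intro x hx
  obtain ⟨p, hp, h⟩ := hx
  exact ⟨p, Set.mem_union_left _ hp, h⟩

/-- The master invariant package. -/
structure Pack (n : ℕ) : Prop where
  le12 : ∀ k, k ≤ n → v1 k ≤ v2 k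
  le23 : ∀ k, k ≤ n → v2 k ≤ v3 k
  mono1 : ∀ j k, j < k → k ≤ n → v1 j < v1 k
  mono2 : ∀ j k, j < k → k ≤ n → v2 j + 2 ≤ v2 k
  mono3 : ∀ j k, j < k → k ≤ n → v3 j + 3 ≤ v3 k
  monod : ∀ j k, j < k → k ≤ n → dd j < dd k
  monoe : ∀ j k, j < k → k ≤ n → ee j < ee k
  dfull : ∀ m, m ≤ max (dd n) (ee n) → m ∈ Dset n
  big : n ≤ max (dd n) (ee n)
  init : ∀ m, m ≤ v1 n → m ∈ Fset n

section packlemmas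
variable {n : ℕ}

lemma v1le (P : Pack n) {k : ℕ} (hk : k ≤ n) : v1 k ≤ v1 n := by
  rcases eq_or_lt_of_le hk with h | h
  · subst h; exact le_refl _
  · exact le_of_lt (P.mono1 _ _ h le_rfl)

lemma v2le (P : Pack n) {k : ℕ} (hk : k ≤ n) : v2 k ≤ v2 n := by
  rcases eq_or_lt_of_le hk with h | h
  · subst h; exact le_refl _
  · have := P.mono2 _ _ h le_rfl; omega

lemma v3le (P : Pack n) {k : ℕ} (hk : k ≤ n) : v3 k ≤ v3 n := by
  rcases eq_or_lt_of_le hk with h | h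
  · subst h; exact le_refl _
  · have := P.mono3 _ _ h le_rfl; omega

lemma ddle (P : Pack n) {k : ℕ} (hk : k ≤ n) : dd k ≤ dd n := by
  rcases eq_or_lt_of_le hk with h | h
  · subst h; exact le_refl _
  · exact le_of_lt (P.monod _ _ h le_rfl)

lemma eele (P : Pack n) {k : ℕ} (hk : k ≤ n) : ee k ≤ ee n := by
  rcases eq_or_lt_of_le hk with h | h
  · subst h; exact le_refl _
  · exact le_of_lt (P.monoe _ _ h le_rfl)

lemma Fbound (P : Pack n) : ∀ x ∈ Fset n, x ≤ v3 n := by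
  intro x hx
  obtain ⟨k, hk, hc⟩ := Fset_elim hx
  have h1 := P.le12 k hk
  have h2 := P.le23 k hk
  have h3 := v3le P hk
  rcases hc with h | h | h <;> omega

lemma Dbound (P : Pack n) : ∀ x ∈ Dset n, x ≤ v3 n := by
  intro x hx
  obtain ⟨k, hk, hc⟩ := Dset_elim hx
  have h1 := P.le12 k hk
  have h2 := P.le23 k hk
  have h3 := v3le P hk
  have e1 : dd k = v2 k - v1 k := rfl
  have e2 : ee k = v3 k - v2 k := rfl
  rcases hc with h | h | h <;> omega

lemma fmono (P : Pack n) {j k : ℕ} (hjk : j < k) (hk : k ≤ n) :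
    (v3 j - v1 j) + 2 ≤ v3 k - v1 k := by
  have hj : j ≤ n := by omega
  have h1 := P.le12 j hj
  have h2 := P.le23 j hj
  have h3 := P.le12 k hk
  have h4 := P.le23 k hk
  have h5 := P.monod j k hjk hk
  have h6 := P.monoe j k hjk hk
  have e1 : dd j = v2 j - v1 j := rfl
  have e2 : ee j = v3 j - v2 j := rfl
  have e3 : dd k = v2 k - v1 k := rfl
  have e4 : ee k = v3 k - v2 k := rfl
  omega

end packlemmas

/-- Facts about the mex of the union shape used in `step`. -/
lemma step_mex {D F : Set ℕ} {B : ℕ} (t : ℕ) (h0 : (0:ℕ) ∈ F)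
    (hD : ∀ x ∈ D, x ≤ B) (hF : ∀ x ∈ F, x ≤ B) :
    mex ((fun d => t + d) '' D ∪ Set.Icc 1 t ∪ F) ∉ F ∧
    t < mex ((fun d => t + d) '' D ∪ Set.Icc 1 t ∪ F) ∧
    (mex ((fun d => t + d) '' D ∪ Set.Icc 1 t ∪ F) - t) ∉ D ∧
    ∀ y, t < y → y ∉ F → (y - t) ∉ D →
      mex ((fun d => t + d) '' D ∪ Set.Icc 1 t ∪ F) ≤ y := by
  set S := (fun d => t + d) '' D ∪ Set.Icc 1 t ∪ F with hS
  have hw : t + B + 1 ∉ S := by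
    rintro ((⟨d', hd', heq⟩ | hic) | hf)
    · have := hD _ hd'; simp only at heq; omega
    · rw [Set.mem_Icc] at hic; omega
    · have := hF _ hf; omega
  have hm : mex S ∉ S := mex_notMem hw
  have hmF : mex S ∉ F := fun h => hm (Set.mem_union_right _ h)
  have hmIcc : mex S ∉ Set.Icc 1 t := fun h => hm (Set.mem_union_left _ (Set.mem_union_right _ h))
  have hmim : ∀ d' ∈ D, mex S ≠ t + d' := by
    intro d' hd' heq
    exact hm (Set.mem_union_left _ (Set.mem_union_left _ ⟨d', hd', heq.symm⟩))
  have hm0 : mex S ≠ 0 := by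
    intro h
    exact hmF (h ▸ h0)
  have hmt : t < mex S := by
    rw [Set.mem_Icc] at hmIcc
    omega
  refine ⟨hmF, hmt, fun h => hmim _ h (by omega), ?_⟩
  intro y hty hyF hyD
  apply mex_le
  rintro ((⟨d', hd', heq⟩ | hic) | hf)
  · simp only at heq
    have : d' = y - t := by omega
    exact hyD (this ▸ hd')
  · rw [Set.mem_Icc] at hic; omega
  · exact hyF hf

/-- The induction step. -/
lemma pack_succ {n : ℕ} (P : Pack n) : Pack (n + 1) := by
  have Fb := Fbound P
  have Db := Dbound P
  have h0F : (0:ℕ) ∈ Fset n := P.init 0 (Nat.zero_le _)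
  -- a = v1 (n+1)
  have haF : mex (Fset n) ∉ Fset n := mex_notMem (show v3 n + 1 ∉ Fset n from
    fun h => by have := Fb _ h; omega)
  have ha_def : v1 (n+1) = mex (Fset n) := v1_succ n
  have ha_gt : v1 n < v1 (n+1) := by
    rw [ha_def]
    by_contra h
    push_neg at h
    exact haF (P.init _ h)
  -- h1 facts
  have h1D : mex (Dset n) ∉ Dset n := mex_notMem (show v3 n + 1 ∉ Dset n from
    fun h => by have := Db _ h; omega)
  set h1 := mex (Dset n) with hh1
  have h1low : ∀ m, m < h1 → m ∈ Dset n := fun m hm => mem_of_lt_mex hm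
  have hMd : dd n ≤ max (dd n) (ee n) := le_max_left _ _
  have hMe : ee n ≤ max (dd n) (ee n) := le_max_right _ _
  have h1M : max (dd n) (ee n) < h1 := by
    by_contra h
    push_neg at h
    exact h1D (P.dfull _ h)
  -- h2 facts
  have h2D : mex (Dset n ∪ {h1}) ∉ (Dset n ∪ {h1}) :=
    mex_notMem (x := v3 n + h1 + 1) (by
      rintro (h | h)
      · have := Db _ h; omega
      · rw [Set.mem_singleton_iff] at h; omega)
  set h2 := mex (Dset n ∪ {h1}) with hh2
  have h2low : ∀ m, m < h2 → m ∈ Dset n ∪ {h1} := fun m hm => mem_of_lt_mex hm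
  have h2notD : h2 ∉ Dset n := fun h => h2D (Set.mem_union_left _ h)
  have h2ne : h2 ≠ h1 := fun h => h2D (Set.mem_union_right _ (by rw [Set.mem_singleton_iff]; exact h))
  have h2gt : h1 < h2 := by
    rcases lt_trichotomy h2 h1 with h | h | h
    · exact absurd (h1low _ h) h2notD
    · exact absurd h h2ne
    · exact h
  have fpair : h2 ≤ h1 + 2 := by
    by_contra hcon
    push_neg at hcon
    have m1 : h1 + 1 ∈ Dset n := by
      rcases h2low (h1+1) (by omega) with h | h
      · exact h
      · rw [Set.mem_singleton_iff] at h; omega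
    have m2 : h1 + 2 ∈ Dset n := by
      rcases h2low (h1+2) (by omega) with h | h
      · exact h
      · rw [Set.mem_singleton_iff] at h; omega
    obtain ⟨j, hj, cj⟩ := Dset_elim m1
    obtain ⟨k, hk, ck⟩ := Dset_elim m2
    have hdj := ddle P hj
    have hej := eele P hj
    have hdk := ddle P hk
    have hek := eele P hk
    rcases cj with cj | cj | cj
    · omega
    · omega
    · rcases ck with ck | ck | ck
      · omega
      · omega
      · have hjk : j ≠ k := by
          intro h; subst h; omega
        rcases hjk.lt_or_gt with h | h
        · have := fmono P h hk; omega
        · have := fmono P h hj; omega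
  -- b facts
  obtain ⟨hbF, hba, hbd, hbmin⟩ := step_mex (D := Dset n) (F := Fset n) (B := v3 n)
      (v1 (n+1)) h0F Db Fb
  rw [← v2_succ n] at hbF hba hbd hbmin
  have hdh1 : h1 ≤ v2 (n+1) - v1 (n+1) := by
    by_contra h
    push_neg at h
    exact hbd (h1low _ h)
  -- arithmetic helper facts
  have hddn : dd n = v2 n - v1 n := rfl
  have heen : ee n = v3 n - v2 n := rfl
  have hl12 := P.le12 n le_rfl
  have hl23 := P.le23 n le_rfl
  -- b ≤ a + h2
  have hble : v2 (n+1) ≤ v1 (n+1) + h2 := by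
    by_cases hx1 : v1 (n+1) + h1 ∈ Fset n
    · obtain ⟨k1, hk1, c1⟩ := Fset_elim hx1
      have hv1k1 := v1le P hk1
      have hv2k1 := v2le P hk1
      rcases c1 with c1 | c1 | c1
      · omega
      · omega
      · -- c1 : v1 (n+1) + h1 = v3 k1
        have hx2 : v1 (n+1) + h2 ∉ Fset n := by
          intro hmem
          obtain ⟨k2, hk2, c2⟩ := Fset_elim hmem
          have hv1k2 := v1le P hk2
          have hv2k2 := v2le P hk2
          rcases c2 with c2 | c2 | c2
          · omega
          · omega
          · have hne : k1 ≠ k2 := by intro h; subst h; omega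
            rcases hne.lt_or_gt with h | h
            · have := P.mono3 _ _ h hk2; omega
            · have := P.mono3 _ _ h hk1; omega
        have := hbmin (v1 (n+1) + h2) (by omega) hx2 (by
          have : v1 (n+1) + h2 - v1 (n+1) = h2 := by omega
          rw [this]; exact h2notD)
        omega
    · have := hbmin (v1 (n+1) + h1) (by omega) hx1 (by
        have : v1 (n+1) + h1 - v1 (n+1) = h1 := by omega
        rw [this]; exact h1D)
      omega
  -- middle cover
  have hmid : ∀ m, h1 < m → m < v2 (n+1) - v1 (n+1) → m ∈ Dset n := by
    intro m hm1 hm2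
    have hmh2 : m < h2 := by omega
    rcases h2low m hmh2 with h | h
    · exact h
    · rw [Set.mem_singleton_iff] at h; omega
  -- c facts
  obtain ⟨hcF, hcb, hce, hcmin⟩ := step_mex (D := Dset n) (F := Fset n) (B := v3 n)
      (v2 (n+1)) h0F Db Fb
  rw [← v3_succ n] at hcF hcb hce hcmin
  have heh1 : h1 ≤ v3 (n+1) - v2 (n+1) := by
    by_contra h
    push_neg at h
    exact hce (h1low _ h)
  -- c ≤ b + h1
  have hcle : v3 (n+1) ≤ v2 (n+1) + h1 := by
    have hxF : v2 (n+1) + h1 ∉ Fset n := by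
      intro h
      have := Fb _ h
      omega
    have := hcmin (v2 (n+1) + h1) (by omega) hxF (by
      have : v2 (n+1) + h1 - v2 (n+1) = h1 := by omega
      rw [this]; exact h1D)
    omega
  have hee_eq : ee (n+1) = h1 := by
    have : ee (n+1) = v3 (n+1) - v2 (n+1) := rfl
    omega
  have hdd_eq : dd (n+1) = v2 (n+1) - v1 (n+1) := rfl
  have hbig := P.big
  -- assemble
  refine ⟨?_, ?_, ?_, ?_, ?_, ?_, ?_, ?_, ?_, ?_⟩
  · intro k hk
    rcases Nat.lt_or_ge k (n+1) with h | h
    · exact P.le12 k (by omega)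
    · have : k = n + 1 := by omega
      subst this; omega
  · intro k hk
    rcases Nat.lt_or_ge k (n+1) with h | h
    · exact P.le23 k (by omega)
    · have : k = n + 1 := by omega
      subst this; omega
  · intro j k hjk hk
    rcases Nat.lt_or_ge k (n+1) with h | h
    · exact P.mono1 j k hjk (by omega)
    · have : k = n + 1 := by omega
      subst this
      have := v1le P (show j ≤ n by omega)
      omega
  · intro j k hjk hk
    rcases Nat.lt_or_ge k (n+1) with h | h
    · exact P.mono2 j k hjk (by omega)
    · have : k = n + 1 := by omega
      subst this
      have := v2le P (show j ≤ n by omega)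
      omega
  · intro j k hjk hk
    rcases Nat.lt_or_ge k (n+1) with h | h
    · exact P.mono3 j k hjk (by omega)
    · have : k = n + 1 := by omega
      subst this
      have := v3le P (show j ≤ n by omega)
      omega
  · intro j k hjk hk
    rcases Nat.lt_or_ge k (n+1) with h | h
    · exact P.monod j k hjk (by omega)
    · have : k = n + 1 := by omega
      subst this
      have := ddle P (show j ≤ n by omega)
      omega
  · intro j k hjk hk
    rcases Nat.lt_or_ge k (n+1) with h | h
    · exact P.monoe j k hjk (by omega)
    · have : k = n + 1 := by omega
      subst this
      have := eele P (show j ≤ n by omega)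
      omega
  · intro m hm
    have hmax : max (dd (n+1)) (ee (n+1)) = dd (n+1) := by omega
    rw [hmax] at hm
    rcases lt_trichotomy m h1 with h | h | h
    · exact Dset_mono (h1low _ h)
    · subst h
      have := mem_De (le_refl (n+1))
      rw [hee_eq] at this
      exact this
    · rcases Nat.lt_or_ge m (dd (n+1)) with h' | h'
      · exact Dset_mono (hmid m h (by omega))
      · have : m = dd (n+1) := by omega
        subst this
        exact mem_Dd (le_refl (n+1))
  · omega
  · intro m hm
    rcases Nat.lt_or_ge m (v1 (n+1)) with h | h
    · have : m ∈ Fset n := mem_of_lt_mex (by rw [← ha_def]; exact h)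
      exact Fset_mono this
    · have : m = v1 (n+1) := by omega
      subst this
      exact mem_F1 (le_refl (n+1))

lemma pack_zero : Pack 0 := by
  have e1 : v1 0 = 0 := rfl
  have e2 : v2 0 = 0 := rfl
  have e3 : v3 0 = 0 := rfl
  have e4 : dd 0 = 0 := rfl
  have e5 : ee 0 = 0 := rfl
  refine ⟨?_, ?_, ?_, ?_, ?_, ?_, ?_, ?_, ?_, ?_⟩
  · intro k hk; interval_cases k; omega
  · intro k hk; interval_cases k; omega
  · intro j k h hk; omega
  · intro j k h hk; omega
  · intro j k h hk; omega
  · intro j k h hk; omega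
  · intro j k h hk; omega
  · intro m hm
    have : m = 0 := by omega
    subst this
    have := mem_Dd (le_refl 0)
    rwa [e4] at this
  · omega
  · intro m hm
    have : m = 0 := by omega
    subst this
    have := mem_F1 (le_refl 0)
    rwa [e1] at this

lemma pack_all (n : ℕ) : Pack n := by
  induction n with
  | zero => exact pack_zero
  | succ n ih => exact pack_succ ih

/-- The gap bounds. -/
lemma gap (n : ℕ) : v1 n < v1 (n + 1) ∧ v1 (n + 1) ≤ v1 n + 4 := by
  have P := pack_all n
  have Fb := Fbound P
  have haF : mex (Fset n) ∉ Fset n := mex_notMem (show v3 n + 1 ∉ Fset n from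
    fun h => by have := Fb _ h; omega)
  have ha_def : v1 (n+1) = mex (Fset n) := v1_succ n
  constructor
  · rw [ha_def]
    by_contra h
    push_neg at h
    exact haF (P.init _ h)
  · rw [ha_def]
    by_contra hcon
    push_neg at hcon
    have w : ∀ i, 1 ≤ i → i ≤ 4 → v1 n + i ∈ Fset n := fun i hi1 hi4 =>
      mem_of_lt_mex (by omega)
    have cl : ∀ i, 1 ≤ i → i ≤ 4 → ∃ k, k ≤ n ∧ (v1 n + i = v2 k ∨ v1 n + i = v3 k) := by
      intro i hi1 hi4
      obtain ⟨k, hk, hc⟩ := Fset_elim (w i hi1 hi4)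
      rcases hc with h | h | h
      · have := v1le P hk; omega
      · exact ⟨k, hk, Or.inl h⟩
      · exact ⟨k, hk, Or.inr h⟩
    obtain ⟨k1, hk1, t1⟩ := cl 1 (by norm_num) (by norm_num)
    obtain ⟨k2, hk2, t2⟩ := cl 2 (by norm_num) (by norm_num)
    obtain ⟨k3, hk3, t3⟩ := cl 3 (by norm_num) (by norm_num)
    obtain ⟨k4, hk4, t4⟩ := cl 4 (by norm_num) (by norm_num)
    have P2 : ∀ j k, j ≤ n → k ≤ n → (v2 j = v2 k ∨ v2 j + 2 ≤ v2 k ∨ v2 k + 2 ≤ v2 j) := by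
      intro j k hj hk
      rcases lt_trichotomy j k with h | h | h
      · exact Or.inr (Or.inl (P.mono2 j k h hk))
      · subst h; exact Or.inl rfl
      · exact Or.inr (Or.inr (P.mono2 k j h hj))
    have P3 : ∀ j k, j ≤ n → k ≤ n → (v3 j = v3 k ∨ v3 j + 3 ≤ v3 k ∨ v3 k + 3 ≤ v3 j) := by
      intro j k hj hk
      rcases lt_trichotomy j k with h | h | h
      · exact Or.inr (Or.inl (P.mono3 j k h hk))
      · subst h; exact Or.inl rfl
      · exact Or.inr (Or.inr (P.mono3 k j h hj))
    rcases t1 with e1 | e1 <;> rcases t2 with e2 | e2 <;>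
      rcases t3 with e3 | e3 <;> rcases t4 with e4 | e4 <;>
      first
      | (have q := P2 k1 k2 hk1 hk2; omega)
      | (have q := P3 k1 k2 hk1 hk2; omega)
      | (have q := P2 k2 k3 hk2 hk3; omega)
      | (have q := P3 k2 k3 hk2 hk3; omega)
      | (have q := P2 k3 k4 hk3 hk4; omega)
      | (have q := P3 k3 k4 hk3 hk4; omega)
      | (have q := P3 k1 k3 hk1 hk3; omega)
      | (have q := P3 k2 k4 hk2 hk4; omega)

theorem stmt10 : ∀ n : ℕ, (v1 (n + 1) : ℤ) - v1 n ∈ ({1, 2, 3, 4} : Set ℤ) := by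
  intro n
  obtain ⟨h1, h2⟩ := gap n
  simp only [Set.mem_insert_iff, Set.mem_singleton_iff]
  omega
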